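/- A vertex v of a graph G lies in every star set corresponding to an eigenvalue μ of G if and only if μ = 0 and v is an isolated vertex of G. -/

import Mathlib

open Matrix

noncomputable def eigSpace {m : Type*} [Fintype m] [DecidableEq m]
    (A : Matrix m m ℝ) (lam : ℝ) : Submodule ℝ (m → ℝ) :=
  LinearMap.ker (Matrix.mulVecLin (A - lam • (1 : Matrix m m ℝ)))

/-- `lam` is an eigenvalue of the real matrix `A`. -/
def IsEig {m : Type*} [Fintype m] [DecidableEq m] (A : Matrix m m ℝ) (lam : ℝ) : Prop :=
  eigSpace A lam ≠ ⊥

/-- The multiplicity of `lam` as an eigenvalue of `A`. -/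
noncomputable def multE {m : Type*} [Fintype m] [DecidableEq m]
    (A : Matrix m m ℝ) (lam : ℝ) : ℕ :=
  Module.finrank ℝ (eigSpace A lam)

/-- `lam` is a main eigenvalue of `A`: its eigenspace is not orthogonal to the all-ones
vector. -/
def IsMainEig {m : Type*} [Fintype m] [DecidableEq m] (A : Matrix m m ℝ) (lam : ℝ) : Prop :=
  ∃ x ∈ eigSpace A lam, ∑ i, x i ≠ 0

/-- The adjacency matrix of the subgraph of `G` induced by the vertex set `S`. -/
def indMatrix {n : ℕ} (G : SimpleGraph (Fin n)) [DecidableRel G.Adj] (S : Finset (Fin n)) :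
    Matrix S S ℝ :=
  (G.adjMatrix ℝ).submatrix (fun i => (i : Fin n)) (fun j => (j : Fin n))

/-- `X` is a `lam`-star set of `G`: its cardinality equals the multiplicity of `lam`
and `lam` is not an eigenvalue of the subgraph induced by the complement of `X`. -/
def IsStarSet {n : ℕ} (G : SimpleGraph (Fin n)) [DecidableRel G.Adj] (lam : ℝ)
    (X : Finset (Fin n)) : Prop :=
  X.card = multE (G.adjMatrix ℝ) lam ∧ ¬ IsEig (indMatrix G Xᶜ) lam

/-- The block `N` of the adjacency matrix: rows indexed by `Xᶜ`, columns by `X`. -/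
def Nmat {n : ℕ} (G : SimpleGraph (Fin n)) [DecidableRel G.Adj] (X : Finset (Fin n)) :
    Matrix ↥(Xᶜ) ↥X ℝ :=
  (G.adjMatrix ℝ).submatrix (fun i => (i : Fin n)) (fun j => (j : Fin n))

/-- The block `C` of the adjacency matrix: the adjacency matrix of `G - X`. -/
def Cmat {n : ℕ} (G : SimpleGraph (Fin n)) [DecidableRel G.Adj] (X : Finset (Fin n)) :
    Matrix ↥(Xᶜ) ↥(Xᶜ) ℝ :=
  indMatrix G Xᶜ

lemma mem_eigSpace_iff {m : Type*} [Fintype m] [DecidableEq m]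
    (A : Matrix m m ℝ) (lam : ℝ) (x : m → ℝ) :
    x ∈ eigSpace A lam ↔ A.mulVec x = lam • x := by
  simp only [eigSpace, LinearMap.mem_ker, Matrix.mulVecLin_apply, Matrix.sub_mulVec,
    Matrix.smul_mulVec, Matrix.one_mulVec, sub_eq_zero]

lemma isEig_of_vec {m : Type*} [Fintype m] [DecidableEq m]
    (A : Matrix m m ℝ) (lam : ℝ) (x : m → ℝ) (hx : x ≠ 0)
    (h : A.mulVec x = lam • x) : IsEig A lam := by
  intro hbot
  have : x ∈ eigSpace A lam := (mem_eigSpace_iff A lam x).mpr h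
  rw [hbot, Submodule.mem_bot] at this
  exact hx this

lemma ind_mulVec {n : ℕ} (G : SimpleGraph (Fin n)) [DecidableRel G.Adj]
    (X : Finset (Fin n)) (y : Fin n → ℝ) (hsupp : ∀ x ∈ X, y x = 0) (u : ↥(Xᶜ)) :
    (indMatrix G Xᶜ).mulVec (fun w : ↥(Xᶜ) => y w) u = (G.adjMatrix ℝ).mulVec y (u : Fin n) := by
  have h1 : (indMatrix G Xᶜ).mulVec (fun w : ↥(Xᶜ) => y w) u
      = ∑ w ∈ Xᶜ, (G.adjMatrix ℝ) (u : Fin n) w * y w := by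
    rw [Matrix.mulVec, dotProduct]
    exact Finset.sum_coe_sort (Xᶜ) (fun w => (G.adjMatrix ℝ) (u : Fin n) w * y w)
  have h2 : (G.adjMatrix ℝ).mulVec y (u : Fin n)
      = ∑ w ∈ X, (G.adjMatrix ℝ) (u : Fin n) w * y w
        + ∑ w ∈ Xᶜ, (G.adjMatrix ℝ) (u : Fin n) w * y w := by
    rw [Matrix.mulVec, dotProduct,
      ← Finset.sum_add_sum_compl X (fun w => (G.adjMatrix ℝ) (u : Fin n) w * y w)]
  have h3 : ∑ w ∈ X, (G.adjMatrix ℝ) (u : Fin n) w * y w = 0 :=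
    Finset.sum_eq_zero fun w hw => by rw [hsupp w hw, mul_zero]
  rw [h1, h2, h3, zero_add]

lemma starset_inj {n : ℕ} (G : SimpleGraph (Fin n)) [DecidableRel G.Adj] (mu : ℝ)
    (X : Finset (Fin n)) (hC : ¬ IsEig (indMatrix G Xᶜ) mu)
    (y : Fin n → ℝ) (hy : y ∈ eigSpace (G.adjMatrix ℝ) mu)
    (hsupp : ∀ x ∈ X, y x = 0) : y = 0 := by
  set z : ↥(Xᶜ) → ℝ := fun w => y w with hz
  have hyz : (indMatrix G Xᶜ).mulVec z = mu • z := by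
    funext u
    rw [hz, ind_mulVec G X y hsupp u, (mem_eigSpace_iff _ _ _).mp hy]
    rfl
  have hz0 : z = 0 := by
    by_contra h
    exact hC (isEig_of_vec _ _ z h hyz)
  funext w
  by_cases hw : w ∈ X
  · exact hsupp w hw
  · have : z ⟨w, Finset.mem_compl.mpr hw⟩ = 0 := by rw [hz0]; rfl
    exact this

lemma symm_mulVec_dot {m : Type*} [Fintype m] (B : Matrix m m ℝ) (hB : Bᵀ = B)
    (x y : m → ℝ) : B.mulVec x ⬝ᵥ y = x ⬝ᵥ B.mulVec y := by
  rw [Matrix.dotProduct_mulVec x B y]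
  congr 1
  rw [← hB, Matrix.vecMul_transpose, hB]

lemma starset_of_inj {n : ℕ} (G : SimpleGraph (Fin n)) [DecidableRel G.Adj] (mu : ℝ)
    (X : Finset (Fin n))
    (hcard : X.card = Module.finrank ℝ (eigSpace (G.adjMatrix ℝ) mu))
    (hinj : ∀ y ∈ eigSpace (G.adjMatrix ℝ) mu, (∀ x ∈ X, y x = 0) → y = 0) :
    ¬ IsEig (indMatrix G Xᶜ) mu := by
  set A := G.adjMatrix ℝ with hA
  set E := eigSpace A mu with hE
  set B := A - mu • (1 : Matrix (Fin n) (Fin n) ℝ) with hB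
  have hBsym : Bᵀ = B := by
    rw [hB, Matrix.transpose_sub, Matrix.transpose_smul, Matrix.transpose_one,
      G.transpose_adjMatrix]
  -- the restriction map
  set r : E →ₗ[ℝ] (↥X → ℝ) :=
    LinearMap.pi (fun x : ↥X => (LinearMap.proj (x : Fin n)).comp E.subtype) with hr
  have hrapp : ∀ (y : E) (x : ↥X), r y x = (y : Fin n → ℝ) x := fun y x => rfl
  have hrinj : Function.Injective r := by
    rw [← LinearMap.ker_eq_bot, LinearMap.ker_eq_bot']
    intro y hy0
    have : (y : Fin n → ℝ) = 0 := by
      refine hinj y y.2 fun x hx => ?_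
      have := congrFun hy0 ⟨x, hx⟩
      simpa [hrapp] using this
    exact Subtype.ext this
  have hdim : Module.finrank ℝ E = Module.finrank ℝ (↥X → ℝ) := by
    rw [Module.finrank_pi, ← hcard]
    simp
  have hrsurj : Function.Surjective r := by
    have := (r.linearEquivOfInjective hrinj hdim).surjective
    intro t
    obtain ⟨y, hy⟩ := this t
    exact ⟨y, by rw [← r.linearEquivOfInjective_apply hrinj hdim, hy]⟩
  -- now the main argument
  intro hEig
  obtain ⟨z, hzmem, hz0⟩ := Submodule.exists_mem_ne_zero_of_ne_bot hEig
  set zh : Fin n → ℝ := fun u => if h : u ∈ Xᶜ then z ⟨u, h⟩ else 0 with hzh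
  have hrest : (fun w : ↥(Xᶜ) => zh w) = z := by
    funext w
    simp only [hzh, dif_pos w.2]
  have hsuppz : ∀ x ∈ X, zh x = 0 := fun x hx => by
    simp only [hzh, dif_neg (by simpa using hx : ¬ x ∈ Xᶜ)]
  set w : Fin n → ℝ := B.mulVec zh with hw
  have hwC : ∀ u : ↥(Xᶜ), w (u : Fin n) = 0 := by
    intro u
    have h1 : A.mulVec zh (u : Fin n) = (indMatrix G Xᶜ).mulVec z u := by
      rw [← hrest, ind_mulVec G X zh hsuppz u]
    have h2 : (indMatrix G Xᶜ).mulVec z = mu • z := (mem_eigSpace_iff _ _ _).mp hzmem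
    have : w (u : Fin n) = A.mulVec zh (u : Fin n) - mu * zh (u : Fin n) := by
      simp [hw, hB, Matrix.sub_mulVec, Matrix.smul_mulVec, Matrix.one_mulVec]
    rw [this, h1, h2]
    have : zh (u : Fin n) = z u := by simp only [hzh, dif_pos u.2]
    simp [this]
  have hwsupp : ∀ u, u ∉ X → w u = 0 := fun u hu => hwC ⟨u, Finset.mem_compl.mpr hu⟩
  have hworth : ∀ y : Fin n → ℝ, y ∈ E → w ⬝ᵥ y = 0 := by
    intro y hy
    rw [hw, symm_mulVec_dot B hBsym]
    have : B.mulVec y = 0 := hy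
    rw [this, dotProduct_zero]
  -- find y in E matching w on X
  obtain ⟨y, hy⟩ := hrsurj (fun x : ↥X => w (x : Fin n))
  have hsum : ∑ x ∈ X, w x * w x = 0 := by
    have h0 : w ⬝ᵥ (y : Fin n → ℝ) = 0 := hworth _ y.2
    have hyX : ∀ x ∈ X, (y : Fin n → ℝ) x = w x := by
      intro x hx
      have := congrFun hy ⟨x, hx⟩
      simpa [hrapp] using this
    rw [dotProduct, ← Finset.sum_add_sum_compl X] at h0
    have hc : ∑ u ∈ Xᶜ, w u * (y : Fin n → ℝ) u = 0 :=
      Finset.sum_eq_zero fun u hu => by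
        rw [hwsupp u (by simpa using hu), zero_mul]
    rw [hc, add_zero] at h0
    rw [← h0]
    exact Finset.sum_congr rfl fun x hx => by rw [hyX x hx]
  have hwX : ∀ x ∈ X, w x = 0 := by
    intro x hx
    have := (Finset.sum_eq_zero_iff_of_nonneg (fun u _ => mul_self_nonneg (w u))).mp hsum x hx
    exact mul_self_eq_zero.mp this
  have hw0 : w = 0 := funext fun u => by
    by_cases hu : u ∈ X
    · exact hwX u hu
    · exact hwsupp u hu
  have hzhE : zh ∈ E := by
    show B.mulVec zh = 0
    rw [← hw, hw0]
  have : zh = 0 := hinj zh hzhE hsuppz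
  apply hz0
  rw [← hrest, this]
  rfl

lemma exists_starset_avoid {n : ℕ} (G : SimpleGraph (Fin n)) [DecidableRel G.Adj] (mu : ℝ)
    (v : Fin n) (hnev : (Pi.single v 1 : Fin n → ℝ) ∉ eigSpace (G.adjMatrix ℝ) mu) :
    ∃ X : Finset (Fin n),
      X.card = Module.finrank ℝ (eigSpace (G.adjMatrix ℝ) mu) ∧
      (∀ y ∈ eigSpace (G.adjMatrix ℝ) mu, (∀ x ∈ X, y x = 0) → y = 0) ∧ v ∉ X := by
  classical
  set E := eigSpace (G.adjMatrix ℝ) mu with hEdef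
  set g : {u : Fin n // u ≠ v} → Module.Dual ℝ E :=
    fun u => (LinearMap.proj (u : Fin n)).comp E.subtype with hg
  have hgapp : ∀ (u : {u : Fin n // u ≠ v}) (y : E), g u y = (y : Fin n → ℝ) u := fun _ _ => rfl
  -- the coordinate functionals away from v span the dual of E
  have hspan : Submodule.span ℝ (Set.range g) = ⊤ := by
    set W := Submodule.span ℝ (Set.range g) with hW
    have hco : W.dualCoannihilator = ⊥ := by
      rw [Submodule.eq_bot_iff]
      intro y hy
      rw [Submodule.mem_dualCoannihilator] at hy
      have hcoord : ∀ u : Fin n, u ≠ v → (y : Fin n → ℝ) u = 0 := by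
        intro u hu
        exact hy (g ⟨u, hu⟩) (Submodule.subset_span (Set.mem_range_self _))
      by_contra hy0
      have hyv : (y : Fin n → ℝ) v ≠ 0 := by
        intro h0
        apply hy0
        apply Subtype.ext
        funext u
        by_cases hu : u = v
        · rw [hu]; exact h0
        · exact hcoord u hu
      apply hnev
      have heq : (Pi.single v 1 : Fin n → ℝ) = ((y : Fin n → ℝ) v)⁻¹ • (y : Fin n → ℝ) := by
        funext u
        by_cases hu : u = v
        · subst hu
          simp [Pi.single_apply, inv_mul_cancel₀ hyv]
        · simp [Pi.single_apply, hu, hcoord u hu]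
      rw [heq]
      exact E.smul_mem _ y.2
    have h1 := Subspace.finrank_add_finrank_dualCoannihilator_eq W
    rw [hco, finrank_bot, add_zero] at h1
    apply Submodule.eq_top_of_finrank_eq
    rw [h1, Subspace.dual_finrank_eq]
  -- extract a basis from the spanning family
  obtain ⟨b, hbsub, hbspan, hbind⟩ := exists_linearIndependent ℝ (Set.range g)
  rw [hspan] at hbspan
  have hbfin : b.Finite := hbind.finite
  haveI : Fintype b := hbfin.fintype
  -- choose preimages
  have hchoice : ∀ f : b, ∃ u : {u : Fin n // u ≠ v}, g u = (f : Module.Dual ℝ E) :=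
    fun f => hbsub f.2
  choose c hc using hchoice
  have hcinj : Function.Injective (fun f : b => ((c f : {u : Fin n // u ≠ v}) : Fin n)) := by
    intro f1 f2 h
    have : c f1 = c f2 := Subtype.ext h
    have := congrArg g this
    rw [hc f1, hc f2] at this
    exact Subtype.ext this
  set X : Finset (Fin n) :=
    Finset.image (fun f : b => ((c f : {u : Fin n // u ≠ v}) : Fin n)) Finset.univ with hX
  refine ⟨X, ?_, ?_, ?_⟩
  · rw [hX, Finset.card_image_of_injective _ hcinj, Finset.card_univ]
    have h1 : Module.finrank ℝ (Submodule.span ℝ b) = b.toFinset.card :=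
      finrank_span_set_eq_card hbind
    rw [hbspan, finrank_top] at h1
    rw [← Set.toFinset_card, ← h1, Subspace.dual_finrank_eq]
  · intro y hy hyX
    set yy : E := ⟨y, hy⟩ with hyy
    have hall : ∀ φ : Module.Dual ℝ E, φ yy = 0 := by
      intro φ
      have hφ : φ ∈ Submodule.span ℝ b := by rw [hbspan]; trivial
      induction hφ using Submodule.span_induction with
      | mem f hf =>
          have hfb : (⟨f, hf⟩ : b) = ⟨f, hf⟩ := rfl
          have : g (c ⟨f, hf⟩) yy = 0 := by
            rw [hgapp]
            exact hyX _ (Finset.mem_image.mpr ⟨⟨f, hf⟩, Finset.mem_univ _, rfl⟩)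
          rw [hc ⟨f, hf⟩] at this
          exact this
      | zero => rfl
      | add f1 f2 h1 h2 ih1 ih2 => simp [LinearMap.add_apply, ih1, ih2]
      | smul a f hf ih => simp [LinearMap.smul_apply, ih]
    have : yy = 0 := (Module.forall_dual_apply_eq_zero_iff ℝ yy).mp hall
    simpa [hyy] using congrArg (Subtype.val) this
  · rw [hX]
    intro hv
    obtain ⟨f, _, hf⟩ := Finset.mem_image.mp hv
    exact (c f).2 hf

lemma adj_mulVec_single {n : ℕ} (G : SimpleGraph (Fin n)) [DecidableRel G.Adj]
    (v u : Fin n) : (G.adjMatrix ℝ).mulVec (Pi.single v 1) u = (G.adjMatrix ℝ) u v := by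
  simp [Matrix.mulVec, dotProduct, Pi.single_apply, mul_ite]

theorem stmt11 {n : ℕ} (G : SimpleGraph (Fin n)) [DecidableRel G.Adj] (mu : ℝ)
    (hmu : IsEig (G.adjMatrix ℝ) mu) (v : Fin n) :
    (∀ X : Finset (Fin n), IsStarSet G mu X → v ∈ X) ↔
      (mu = 0 ∧ ∀ u, ¬ G.Adj v u) := by
  constructor
  · intro h
    by_contra hcon
    have hnev : (Pi.single v 1 : Fin n → ℝ) ∉ eigSpace (G.adjMatrix ℝ) mu := by
      intro hmem
      rw [mem_eigSpace_iff] at hmem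
      apply hcon
      have hmu0 : mu = 0 := by
        have := congrFun hmem v
        rw [adj_mulVec_single] at this
        simpa using this.symm
      refine ⟨hmu0, fun u hadj => ?_⟩
      have hne : u ≠ v := fun h => G.irrefl (h ▸ hadj)
      have := congrFun hmem u
      rw [adj_mulVec_single] at this
      rw [hmu0] at this
      simp [Pi.single_apply, hne] at this
      exact this hadj.symm
    obtain ⟨X, hcard, hinj, hvX⟩ := exists_starset_avoid G mu v hnev
    exact hvX (h X ⟨hcard, starset_of_inj G mu X hcard hinj⟩)
  · rintro ⟨hmu0, hiso⟩ X hX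
    by_contra hvX
    apply hX.2
    have hv : v ∈ Xᶜ := Finset.mem_compl.mpr hvX
    set z : ↥(Xᶜ) → ℝ := fun w => (Pi.single v 1 : Fin n → ℝ) w with hz
    have hsupp : ∀ x ∈ X, (Pi.single v 1 : Fin n → ℝ) x = 0 := by
      intro x hx
      have : x ≠ v := fun h => hvX (h ▸ hx)
      simp [Pi.single_apply, this]
    apply isEig_of_vec _ _ z
    · intro h0
      have : z ⟨v, hv⟩ = 0 := by rw [h0]; rfl
      rw [hz] at this
      simp [Pi.single_apply] at this
    · funext u
      rw [hz, ind_mulVec G X _ hsupp u, adj_mulVec_single]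
      rw [hmu0]
      simp [G.adjMatrix_apply]
      intro hadj
      exact hiso u hadj.symm
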